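/- Given any triple (x, y, z) of real numbers in (0, π] satisfying x + y + z ≤ 2π, x ≤ y + z, y ≤ z + x, z ≤ x + y, there exist distinct points p, q, r on the unit two-sphere with d(p,q) = x, d(q,r) = y, d(r,p) = z. -/

import Mathlib

open scoped RealInnerProductSpace

noncomputable def sdist (u v : EuclideanSpace ℝ (Fin 3)) : ℝ :=
  Real.arccos ⟪u, v⟫

def unitSphere : Set (EuclideanSpace ℝ (Fin 3)) :=
  Metric.sphere (0 : EuclideanSpace ℝ (Fin 3)) 1

noncomputable def v3 (a b c : ℝ) : EuclideanSpace ℝ (Fin 3) :=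
  (WithLp.equiv 2 _).symm ![a, b, c]

lemma v3_inner (a b c d e f : ℝ) : ⟪v3 a b c, v3 d e f⟫ = a*d + b*e + c*f := by
  simp [v3, PiLp.inner_apply, Fin.sum_univ_three, RCLike.inner_apply]
  ring

lemma v3_mem (a b c : ℝ) (h : a^2 + b^2 + c^2 = 1) : v3 a b c ∈ unitSphere := by
  rw [unitSphere, mem_sphere_zero_iff_norm, EuclideanSpace.norm_eq]
  simp [v3, Fin.sum_univ_three]
  nlinarith [h]

lemma sdist_self (a : EuclideanSpace ℝ (Fin 3)) (ha : a ∈ unitSphere) : sdist a a = 0 := by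
  rw [unitSphere, mem_sphere_zero_iff_norm] at ha
  rw [sdist, real_inner_self_eq_norm_sq, ha]
  simp [Real.arccos_one]

set_option maxHeartbeats 1000000 in
theorem stmt_7 (x y z : ℝ) (hx : 0 < x) (hy : 0 < y) (hz : 0 < z)
    (hx' : x ≤ Real.pi) (hy' : y ≤ Real.pi) (hz' : z ≤ Real.pi)
    (h1 : x + y + z ≤ 2 * Real.pi) (h2 : x ≤ y + z) (h3 : y ≤ z + x) (h4 : z ≤ x + y) :
    ∃ p q r : EuclideanSpace ℝ (Fin 3), p ∈ unitSphere ∧ q ∈ unitSphere ∧ r ∈ unitSphere ∧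
      p ≠ q ∧ q ≠ r ∧ r ≠ p ∧ sdist p q = x ∧ sdist q r = y ∧ sdist r p = z := by
  have hπ := Real.pi_pos
  have hsx : 0 ≤ Real.sin x := Real.sin_nonneg_of_nonneg_of_le_pi hx.le hx'
  have hsz : 0 ≤ Real.sin z := Real.sin_nonneg_of_nonneg_of_le_pi hz.le hz'
  -- cosine bounds
  have hlow : Real.cos (x + z) ≤ Real.cos y := by
    rcases le_or_gt (x + z) Real.pi with h | h
    · exact Real.cos_le_cos_of_nonneg_of_le_pi hy.le h (by linarith)
    · have : Real.cos (x + z) = Real.cos (2 * Real.pi - (x + z)) := by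
        rw [Real.cos_two_pi_sub]
      rw [this]
      exact Real.cos_le_cos_of_nonneg_of_le_pi hy.le (by linarith) (by linarith)
  have hhigh : Real.cos y ≤ Real.cos (x - z) := by
    rw [← Real.cos_abs (x - z)]
    exact Real.cos_le_cos_of_nonneg_of_le_pi (abs_nonneg _)
      hy' (abs_le.2 ⟨by linarith, by linarith⟩)
  have hadd : Real.cos (x + z) = Real.cos x * Real.cos z - Real.sin x * Real.sin z :=
    Real.cos_add x z
  have hsub : Real.cos (x - z) = Real.cos x * Real.cos z + Real.sin x * Real.sin z :=
    Real.cos_sub x z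
  set c : ℝ := if Real.sin x * Real.sin z = 0 then 1
    else (Real.cos y - Real.cos x * Real.cos z) / (Real.sin x * Real.sin z) with hcdef
  have hdeg : Real.sin x * Real.sin z = 0 → Real.cos y = Real.cos x * Real.cos z := by
    intro h0
    nlinarith [hlow, hhigh, hadd, hsub]
  have hc1 : c ≤ 1 := by
    rw [hcdef]
    split_ifs with h0
    · exact le_refl 1
    · have hpos : 0 < Real.sin x * Real.sin z :=
        lt_of_le_of_ne (mul_nonneg hsx hsz) (Ne.symm h0)
      rw [div_le_one hpos]
      linarith
  have hc2 : -1 ≤ c := by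
    rw [hcdef]
    split_ifs with h0
    · linarith
    · have hpos : 0 < Real.sin x * Real.sin z :=
        lt_of_le_of_ne (mul_nonneg hsx hsz) (Ne.symm h0)
      rw [le_div_iff₀ hpos]
      linarith
  have hkey : Real.cos x * Real.cos z + Real.sin x * Real.sin z * c = Real.cos y := by
    rw [hcdef]
    split_ifs with h0
    · rw [hdeg h0, h0]; ring
    · rw [mul_div_cancel₀ _ h0]; ring
  -- the three points
  set s : ℝ := Real.sqrt (1 - c^2) with hsdef
  have hs2 : s^2 = 1 - c^2 := Real.sq_sqrt (by nlinarith)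
  set p := v3 1 0 0 with hp
  set q := v3 (Real.cos x) (Real.sin x) 0 with hq
  set r := v3 (Real.cos z) (Real.sin z * c) (Real.sin z * s) with hr
  have hpS : p ∈ unitSphere := v3_mem _ _ _ (by norm_num)
  have hqS : q ∈ unitSphere := v3_mem _ _ _ (by nlinarith [Real.sin_sq_add_cos_sq x])
  have hrS : r ∈ unitSphere := v3_mem _ _ _ (by nlinarith [Real.sin_sq_add_cos_sq z])
  have e1 : sdist p q = x := by
    rw [hp, hq, sdist, v3_inner,
      show (1 * Real.cos x + 0 * Real.sin x + 0 * 0 : ℝ) = Real.cos x by ring]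
    exact Real.arccos_cos hx.le hx'
  have e2 : sdist q r = y := by
    rw [hq, hr, sdist, v3_inner,
      show (Real.cos x * Real.cos z + Real.sin x * (Real.sin z * c) + 0 * (Real.sin z * s) : ℝ)
        = Real.cos x * Real.cos z + Real.sin x * Real.sin z * c by ring, hkey]
    exact Real.arccos_cos hy.le hy'
  have e3 : sdist r p = z := by
    rw [hr, hp, sdist, v3_inner,
      show (Real.cos z * 1 + Real.sin z * c * 0 + Real.sin z * s * 0 : ℝ) = Real.cos z by ring]
    exact Real.arccos_cos hz.le hz'
  refine ⟨p, q, r, hpS, hqS, hrS, ?_, ?_, ?_, e1, e2, e3⟩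
  · intro h; rw [h, sdist_self q hqS] at e1; linarith
  · intro h; rw [h, sdist_self r hrS] at e2; linarith
  · intro h; rw [h, sdist_self p hpS] at e3; linarith
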